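/- For every fixed t ∈ [0,T], the map y ↦ V(t,y) is Lipschitz continuous on (0,∞) with Lipschitz constant M·(T − t)·e^{μ(T−t)}: for all y, y' > 0, |V(t,y) − V(t,y')| ≤ M·(T − t)·e^{μ(T−t)}·|y − y'|. -/

import Mathlib

open MeasureTheory ProbabilityTheory

/-- A standard Brownian motion with respect to the filtration `ℱ` under the probability
measure `Pr`: it starts at `0` a.s., has a.s. continuous paths, is adapted, and for
`0 ≤ u ≤ s` the increment `B s - B u` is independent of `ℱ u` and Gaussian with mean `0`
and variance `s - u`. -/
structure IsStandardBM {Ω : Type*} {mΩ : MeasurableSpace Ω}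
    (Pr : Measure Ω) (ℱ : Filtration ℝ mΩ) (B : ℝ → Ω → ℝ) : Prop where
  zero : ∀ᵐ ω ∂Pr, B 0 ω = 0
  cont : ∀ᵐ ω ∂Pr, Continuous fun s => B s ω
  adapted : Adapted ℱ B
  indep : ∀ u s : ℝ, 0 ≤ u → u ≤ s →
    Indep (MeasurableSpace.comap (fun ω => B s ω - B u ω) Real.measurableSpace) (ℱ u) Pr
  gauss : ∀ u s : ℝ, 0 ≤ u → u ≤ s →
    Pr.map (fun ω => B s ω - B u ω) = gaussianReal 0 (Real.toNNReal (s - u))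

/-- `G t y`: the expected reward from stopping immediately at time `t` when the price is `y`. -/
noncomputable def G (M P μ T t y : ℝ) : ℝ :=
  M * P * t + M * y * Real.exp (μ * (T - t)) * (T - t)

/-- `V t y`: the value function, the supremum of expected rewards `E[R^{t,y}(τ)]` over all
stopping times `τ` of the filtration `ℱ` with `t ≤ τ ≤ T` almost surely, where
`R^{t,y}(τ) = M·P·τ + M·Y_T^{t,y}·(T − τ)` and
`Y_T^{t,y} = y·exp((μ − σ²/2)(T − t) + σ(B_T − B_t))`. -/
noncomputable def V {Ω : Type*} {mΩ : MeasurableSpace Ω}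
    (Pr : Measure Ω) (ℱ : Filtration ℝ mΩ) (B : ℝ → Ω → ℝ)
    (M P σ μ T t y : ℝ) : ℝ :=
  sSup {x : ℝ | ∃ τ : Ω → ℝ, IsStoppingTime ℱ (fun ω => (τ ω : WithTop ℝ)) ∧
    (∀ᵐ ω ∂Pr, t ≤ τ ω ∧ τ ω ≤ T) ∧
    x = ∫ ω, (M * P * τ ω +
      M * (y * Real.exp ((μ - σ ^ 2 / 2) * (T - t) + σ * (B T ω - B t ω))) * (T - τ ω)) ∂Pr}

section helpers
open Real
open scoped NNReal ENNReal

lemma gauss_pt' (c : ℝ) (v : ℝ≥0) (hv : v ≠ 0) (x : ℝ) :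
    gaussianPDFReal 0 v x * Real.exp (c * x)
      = Real.exp (c ^ 2 * v / 2) * gaussianPDFReal (c * v) v x := by
  have hv' : (0 : ℝ) < (v : ℝ) := lt_of_le_of_ne v.coe_nonneg (by exact_mod_cast hv.symm)
  simp only [gaussianPDFReal]
  rw [mul_assoc, ← Real.exp_add, mul_left_comm, ← Real.exp_add]
  congr 1
  field_simp
  ring

lemma integrable_exp_gaussianReal' (c : ℝ) (v : ℝ≥0) :
    Integrable (fun x => Real.exp (c * x)) (gaussianReal 0 v) := by
  by_cases hv : v = 0
  · subst hv
    simp only [gaussianReal_zero_var]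
    have h : (fun _ : ℝ => Real.exp (c * 0)) =ᵐ[Measure.dirac (0:ℝ)] fun x => Real.exp (c * x) := by
      rw [ae_dirac_eq]; exact Filter.eventually_pure.2 (by simp)
    exact (integrable_const _).congr h
  · set fn : ℝ → ℝ≥0 := fun x => (gaussianPDFReal 0 v x).toNNReal with hfn
    have hfnm : Measurable fn := (measurable_gaussianPDFReal 0 v).real_toNNReal
    have hpdf : gaussianPDF 0 v = fun x => ((fn x : ℝ≥0) : ℝ≥0∞) := by
      ext x; simp [gaussianPDF, hfn, ENNReal.ofReal]
    rw [gaussianReal_of_var_ne_zero 0 hv, hpdf,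
      integrable_withDensity_iff_integrable_coe_smul hfnm]
    have : (fun x => (fn x : ℝ) • Real.exp (c * x))
        = fun x => Real.exp (c ^ 2 * v / 2) * gaussianPDFReal (c * v) v x := by
      ext x
      rw [smul_eq_mul, hfn]
      simp only [Real.coe_toNNReal _ (gaussianPDFReal_nonneg 0 v x)]
      exact gauss_pt' c v hv x
    rw [this]
    exact (integrable_gaussianPDFReal (c * v) v).const_mul _

lemma integral_exp_gaussianReal' (c : ℝ) (v : ℝ≥0) :
    ∫ x, Real.exp (c * x) ∂(gaussianReal 0 v) = Real.exp (c ^ 2 * v / 2) := by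
  by_cases hv : v = 0
  · subst hv; simp [integral_dirac]
  · set fn : ℝ → ℝ≥0 := fun x => (gaussianPDFReal 0 v x).toNNReal with hfn
    have hfnm : Measurable fn := (measurable_gaussianPDFReal 0 v).real_toNNReal
    have hpdf : gaussianPDF 0 v = fun x => ((fn x : ℝ≥0) : ℝ≥0∞) := by
      ext x; simp [gaussianPDF, hfn, ENNReal.ofReal]
    rw [gaussianReal_of_var_ne_zero 0 hv, hpdf,
      integral_withDensity_eq_integral_smul hfnm]
    have : (fun x => (fn x : ℝ≥0) • Real.exp (c * x))
        = fun x => Real.exp (c ^ 2 * v / 2) * gaussianPDFReal (c * v) v x := by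
      ext x
      rw [NNReal.smul_def, smul_eq_mul, hfn]
      simp only [Real.coe_toNNReal _ (gaussianPDFReal_nonneg 0 v x)]
      exact gauss_pt' c v hv x
    rw [this, integral_const_mul, integral_gaussianPDFReal_eq_one (c * v) hv, mul_one]

lemma aux_int' {Ω : Type*} {mΩ : MeasurableSpace Ω} (Pr : Measure Ω) [IsProbabilityMeasure Pr]
    (t T : ℝ) (f : Ω → ℝ) (hfm : AEStronglyMeasurable f Pr) (hf0 : ∀ ω, 0 ≤ f ω)
    (hfi : Integrable f Pr) (τ : Ω → ℝ) (hτm : Measurable τ)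
    (hae : ∀ᵐ ω ∂Pr, t ≤ τ ω ∧ τ ω ≤ T) :
    ∃ A C : ℝ, A ≤ T ∧ 0 ≤ C ∧ C ≤ (T - t) * ∫ ω, f ω ∂Pr ∧
      ∀ M P z : ℝ, ∫ ω, (M * P * τ ω + M * (z * f ω) * (T - τ ω)) ∂Pr
        = M * P * A + M * z * C := by
  have hτi : Integrable τ Pr := by
    refine (integrable_const (max |t| |T|)).mono' hτm.aestronglyMeasurable ?_
    filter_upwards [hae] with ω hω
    rw [Real.norm_eq_abs]
    refine abs_le.2 ⟨?_, ?_⟩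
    · calc -(max |t| |T|) ≤ -|t| := neg_le_neg (le_max_left _ _)
        _ ≤ t := neg_abs_le t
        _ ≤ τ ω := hω.1
    · exact hω.2.trans ((le_abs_self T).trans (le_max_right _ _))
  have hgm : AEStronglyMeasurable (fun ω => f ω * (T - τ ω)) Pr :=
    hfm.mul (aestronglyMeasurable_const.sub hτm.aestronglyMeasurable)
  have hgi : Integrable (fun ω => f ω * (T - τ ω)) Pr := by
    refine (hfi.const_mul (T - t)).mono' hgm ?_
    filter_upwards [hae] with ω hω
    rw [Real.norm_eq_abs, abs_mul, abs_of_nonneg (hf0 ω), abs_of_nonneg (by linarith [hω.2])]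
    calc f ω * (T - τ ω) ≤ f ω * (T - t) := by
          have := hω.1; have := hf0 ω; nlinarith
      _ = (T - t) * f ω := by ring
  refine ⟨∫ ω, τ ω ∂Pr, ∫ ω, f ω * (T - τ ω) ∂Pr, ?_, ?_, ?_, ?_⟩
  · calc ∫ ω, τ ω ∂Pr ≤ ∫ _, T ∂Pr := by
          refine integral_mono_ae hτi (integrable_const _) ?_
          filter_upwards [hae] with ω hω using hω.2
      _ = T := by simp
  · refine integral_nonneg_of_ae ?_
    filter_upwards [hae] with ω hω
    exact mul_nonneg (hf0 ω) (by linarith [hω.2])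
  · calc ∫ ω, f ω * (T - τ ω) ∂Pr ≤ ∫ ω, (T - t) * f ω ∂Pr := by
          refine integral_mono_ae hgi (hfi.const_mul _) ?_
          filter_upwards [hae] with ω hω
          have := hf0 ω; nlinarith [hω.1]
      _ = (T - t) * ∫ ω, f ω ∂Pr := integral_const_mul _ _
  · intro M P z
    have hrw : (fun ω => M * P * τ ω + M * (z * f ω) * (T - τ ω))
        = fun ω => M * P * τ ω + M * z * (f ω * (T - τ ω)) := by
      ext ω; ring
    rw [hrw, integral_add (hτi.const_mul (M * P)) ((hgi.const_mul (M * z))),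
      integral_const_mul, integral_const_mul]

end helpers

theorem stmt_11 {Ω : Type*} {mΩ : MeasurableSpace Ω}
    (Pr : Measure Ω) [IsProbabilityMeasure Pr] (ℱ : Filtration ℝ mΩ) (B : ℝ → Ω → ℝ)
    (hB : IsStandardBM Pr ℱ B)
    (T M P σ μ : ℝ) (hT : 0 < T) (hM : 0 < M) (hP : 0 < P) (hσ : 0 < σ)
    (t : ℝ) (ht : t ∈ Set.Icc 0 T) (y y' : ℝ) (hy : 0 < y) (hy' : 0 < y') :
    |V Pr ℱ B M P σ μ T t y - V Pr ℱ B M P σ μ T t y'|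
      ≤ M * (T - t) * Real.exp (μ * (T - t)) * |y - y'| := by
  obtain ⟨ht0, htT⟩ := ht
  set X : Ω → ℝ := fun ω => B T ω - B t ω with hX
  have hXm : Measurable X :=
    (((hB.adapted T).mono (ℱ.le T) le_rfl)).sub (((hB.adapted t).mono (ℱ.le t) le_rfl))
  have hmap : Pr.map X = gaussianReal 0 (Real.toNNReal (T - t)) := hB.gauss t T ht0 htT
  have hcoe : ((Real.toNNReal (T - t)) : ℝ) = T - t := Real.coe_toNNReal _ (by linarith)
  set f : Ω → ℝ := fun ω => Real.exp ((μ - σ ^ 2 / 2) * (T - t) + σ * X ω) with hf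
  have hfe : f = fun ω => Real.exp ((μ - σ ^ 2 / 2) * (T - t)) * Real.exp (σ * X ω) := by
    ext ω; exact Real.exp_add _ _
  have hem : Measurable fun x : ℝ => Real.exp (σ * x) :=
    Real.measurable_exp.comp (measurable_const_mul σ)
  have hi1 : Integrable (fun ω => Real.exp (σ * X ω)) Pr := by
    have h := integrable_exp_gaussianReal' σ (Real.toNNReal (T - t))
    rw [← hmap] at h
    exact (integrable_map_measure hem.aestronglyMeasurable hXm.aemeasurable).1 h
  have hint1 : ∫ ω, Real.exp (σ * X ω) ∂Pr = Real.exp (σ ^ 2 * (T - t) / 2) := by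
    have h := integral_exp_gaussianReal' σ (Real.toNNReal (T - t))
    rw [← hmap, integral_map hXm.aemeasurable hem.aestronglyMeasurable, hcoe] at h
    exact h
  have hfi : Integrable f Pr := by rw [hfe]; exact hi1.const_mul _
  have hfm : AEStronglyMeasurable f Pr := hfi.aestronglyMeasurable
  have hf0 : ∀ ω, 0 ≤ f ω := fun ω => (Real.exp_pos _).le
  have hfint : ∫ ω, f ω ∂Pr = Real.exp (μ * (T - t)) := by
    rw [hfe, integral_const_mul, hint1, ← Real.exp_add]
    congr 1; ring
  set S : ℝ → Set ℝ := fun z => {x : ℝ | ∃ τ : Ω → ℝ, IsStoppingTime ℱ (fun ω => (τ ω : WithTop ℝ)) ∧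
    (∀ᵐ ω ∂Pr, t ≤ τ ω ∧ τ ω ≤ T) ∧
    x = ∫ ω, (M * P * τ ω + M * (z * f ω) * (T - τ ω)) ∂Pr} with hS
  have hV : ∀ z : ℝ, V Pr ℱ B M P σ μ T t z = sSup (S z) := fun z => rfl
  -- key decomposition for members
  have hmem : ∀ z : ℝ, ∀ x ∈ S z, ∃ A C : ℝ, A ≤ T ∧ 0 ≤ C ∧
      C ≤ (T - t) * Real.exp (μ * (T - t)) ∧
      x = M * P * A + M * z * C ∧
      (∀ z' : ℝ, (M * P * A + M * z' * C) ∈ S z') := by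
    intro z x hx
    obtain ⟨τ, hst, hae, hxe⟩ := hx
    have hτm : Measurable τ := by
      refine measurable_of_Iic fun i => ?_
      convert ℱ.le i _ (hst i) using 1
      ext ω; simp
    obtain ⟨A, C, hA, hC0, hC, hint⟩ := aux_int' Pr t T f hfm hf0 hfi τ hτm hae
    rw [hfint] at hC
    exact ⟨A, C, hA, hC0, hC, by rw [hxe, hint], fun z' => ⟨τ, hst, hae, (hint M P z').symm⟩⟩
  have hne : ∀ z : ℝ, (S z).Nonempty := by
    intro z
    exact ⟨_, (fun _ => t), isStoppingTime_const ℱ t,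
      Filter.Eventually.of_forall fun ω => ⟨le_rfl, htT⟩, rfl⟩
  have hbdd : ∀ z : ℝ, 0 < z → BddAbove (S z) := by
    intro z hz
    refine ⟨M * P * T + M * z * ((T - t) * Real.exp (μ * (T - t))), fun x hx => ?_⟩
    obtain ⟨A, C, hA, hC0, hC, hxe, -⟩ := hmem z x hx
    rw [hxe]
    have h1 : M * P * A ≤ M * P * T := mul_le_mul_of_nonneg_left hA (by positivity)
    have h2 : M * z * C ≤ M * z * ((T - t) * Real.exp (μ * (T - t))) := mul_le_mul_of_nonneg_left hC (by positivity)
    linarith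
  set L : ℝ := M * (T - t) * Real.exp (μ * (T - t)) * |y - y'| with hL
  have hkey : ∀ z z' : ℝ, 0 < z → 0 < z' → sSup (S z) ≤ sSup (S z')
      + M * (T - t) * Real.exp (μ * (T - t)) * |z - z'| := by
    intro z z' hz hz'
    refine csSup_le (hne z) fun x hx => ?_
    obtain ⟨A, C, hA, hC0, hC, hxe, hmem'⟩ := hmem z x hx
    have hx' : (M * P * A + M * z' * C) ≤ sSup (S z') := le_csSup (hbdd z' hz') (hmem' z')
    have hd : x - (M * P * A + M * z' * C) ≤ M * (T - t) * Real.exp (μ * (T - t)) * |z - z'| := by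
      rw [hxe]
      have : M * P * A + M * z * C - (M * P * A + M * z' * C) = M * ((z - z') * C) := by ring
      rw [this]
      calc M * ((z - z') * C) ≤ M * (|z - z'| * ((T - t) * Real.exp (μ * (T - t)))) := by
            have h1 : (z - z') * C ≤ |z - z'| * C :=
              mul_le_mul_of_nonneg_right (le_abs_self _) hC0
            have h2 : |z - z'| * C ≤ |z - z'| * ((T - t) * Real.exp (μ * (T - t))) :=
              mul_le_mul_of_nonneg_left hC (abs_nonneg _)
            exact mul_le_mul_of_nonneg_left (h1.trans h2) hM.le
        _ = M * (T - t) * Real.exp (μ * (T - t)) * |z - z'| := by ring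
    linarith
  rw [hV y, hV y']
  have h1 := hkey y y' hy hy'
  have h2 := hkey y' y hy' hy
  rw [abs_sub_comm y' y] at h2
  refine abs_sub_le_iff.2 ⟨by linarith, by linarith⟩
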